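/- arXiv:math/9802134 — 3 statements merged into one kernel-verified Lean document; each statement's English description precedes it below -/
import Mathlib

section
/- Let κ be an infinite cardinal and λ a cardinal such that Pr_{κ⁺}(λ; κ) holds (every model with universe λ and vocabulary of cardinality ≤ κ has rk⁰(M; <κ⁺) ≥ κ⁺). If T is a (2,2,κ)-tree and the κ-Souslin set prjlim(T) ⊆ 2^ω × 2^ω contains a λ-square A × A with A ⊆ 2^ω of cardinality λ, then prjlim(T) contains a perfect square P × P with P ⊆ 2^ω a nonempty perfect set. -/
open FirstOrder Cardinal

universe u

namespace Sh522

/-- `a ∈ clLt L M κ B` iff `a` is in the `<κ`-closure of `B` in `M`: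
for some quantifier-free formula `φ(y, x₁, …, xₙ)` and parameters `b` from `B`,
`M ⊨ φ[a, b]` and the set of solutions of `φ(−, b)` has cardinality `< κ`. -/
def clLt (L : FirstOrder.Language.{u, u}) (M : Type u) [L.Structure M]
    (κ : Cardinal.{u}) (B : Set M) : Set M :=
  {a | ∃ (n : ℕ) (φ : L.Formula (Fin (n + 1))),
      FirstOrder.Language.BoundedFormula.IsQF φ ∧
      ∃ b : Fin n → M, (∀ i, b i ∈ B) ∧
        φ.Realize (Fin.cons a b) ∧
        Cardinal.mk {x : M // φ.Realize (Fin.cons x b)} < κ}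

/-- `rk^l(w, M; <κ) ≥ 0`. -/
def rkBase (L : FirstOrder.Language.{u, u}) (M : Type u) [L.Structure M]
    (κ : Cardinal.{u}) (w : Set M) : Prop :=
  w.Finite ∧ w.Nonempty ∧ ∀ a ∈ w, a ∉ clLt L M κ (w \ {a})

/-- The successor step of the rank: `rk^l(w, M; <κ) ≥ β + 1` where `P` is
`rk^l(−, M; <κ) ≥ β`. -/
def rkStep (L : FirstOrder.Language.{u, u}) (M : Type u) [L.Structure M]
    (l : ℕ) (κ : Cardinal.{u}) (P : Set M → Prop) (w : Set M) : Prop :=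
  w.Finite ∧ w.Nonempty ∧
  ∀ (n : ℕ) (a : Fin n → M), Function.Injective a → Set.range a = w →
    ∀ (k : Fin n) (φ : L.Formula (Fin n)),
      FirstOrder.Language.BoundedFormula.IsQF φ → φ.Realize a →
      ∃ b : Fin 2 → Fin n → M,
        P (Set.range fun p : Fin 2 × Fin n => b p.1 p.2) ∧
        (∀ i : Fin 2, φ.Realize (b i)) ∧
        b 0 k ≠ b 1 k ∧
        (∀ m : Fin n, m ≠ k → b 0 m = b 1 m) ∧
        (l = 0 → ∀ m : Fin n, b 0 m = a m)

/-- `rkGe L M l κ α w` says `rk^l(w, M; <κ) ≥ α`. -/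
noncomputable def rkGe (L : FirstOrder.Language.{u, u}) (M : Type u) [L.Structure M]
    (l : ℕ) (κ : Cardinal.{u}) (α : Ordinal.{u}) : Set M → Prop :=
  Ordinal.limitRecOn (motive := fun _ => Set M → Prop) α
    (rkBase L M κ)
    (fun _ ih => rkStep L M l κ ih)
    (fun o _ ih w => ∀ (β : Ordinal.{u}) (h : β < o), ih β h w)

/-- `Pr l α lam bound θ` is `Pr^l_α(lam; <bound, θ)`: every model with universe of
cardinality `lam` and vocabulary of cardinality `≤ θ` has `rk^l(M; <bound) ≥ α`,
where `rk^l(M; <bound) = sup { rk^l(w, M; <bound) + 1 : w ∈ [M]* }`. -/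
def Pr (l : ℕ) (α : Ordinal.{u}) (lam bound θ : Cardinal.{u}) : Prop :=
  ∀ (L : FirstOrder.Language.{u, u}) (M : Type u) (S : L.Structure M),
    Cardinal.mk M = lam → L.card ≤ θ →
    ∀ β < α, ∃ w : Set M, w.Finite ∧ w.Nonempty ∧ @rkGe L M S l bound β w


/-- A `(2,2,κ)`-tree (with `κ` represented by the index type `ι`): a set of
triples `(σ, τ, ρ)` with `σ, τ ∈ 2^n`, `ρ ∈ ι^n`, closed under restriction. -/
structure Tree22 (ι : Type) : Type 1 where
  mem : ∀ n : ℕ, Set ((Fin n → Bool) × (Fin n → Bool) × (Fin n → ι))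
  closed : ∀ (n : ℕ) (x : (Fin n → Bool) × (Fin n → Bool) × (Fin n → ι)),
    x ∈ mem n → ∀ (m : ℕ) (h : m ≤ n),
      ((fun i => x.1 (Fin.castLE h i)), (fun i => x.2.1 (Fin.castLE h i)),
        (fun i => x.2.2 (Fin.castLE h i))) ∈ mem m

/-- The `κ`-Souslin set projected from a `(2,2,κ)`-tree:
`prjlim T = {(η,ν) : ∃ ρ ∈ ι^ω, ∀ n, (η↾n, ν↾n, ρ↾n) ∈ T}`. -/
def prjlim {ι : Type} (T : Tree22 ι) : Set ((ℕ → Bool) × (ℕ → Bool)) :=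
  {p | ∃ ρ : ℕ → ι, ∀ n : ℕ,
    ((fun i : Fin n => p.1 i), (fun i : Fin n => p.2 i), (fun i : Fin n => ρ i)) ∈ T.mem n}
-- AUX: dev part 1



lemma rkGe_succ (L : FirstOrder.Language.{0,0}) (M : Type) [L.Structure M] (l : ℕ) (bd : Cardinal)
    (β : Ordinal) :
    rkGe L M l bd (Order.succ β) = rkStep L M l bd (rkGe L M l bd β) := by
  unfold rkGe
  exact Ordinal.limitRecOn_succ _ _ _ _

lemma rkGe_limit (L : FirstOrder.Language.{0,0}) (M : Type) [L.Structure M] (l : ℕ) (bd : Cardinal)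
    {β : Ordinal} (h : Order.IsSuccLimit β) (w : Set M) :
    rkGe L M l bd β w ↔ ∀ γ < β, rkGe L M l bd γ w := by
  unfold rkGe
  rw [Ordinal.limitRecOn_limit _ _ _ _ h]

def L22 (ι : Type) : Language where
  Functions _ := Empty
  Relations n := Σ m : ℕ, ((Fin n → Fin m → Bool) × (Fin n → Fin n → Fin m → ι))

def S22 {ι M : Type} (q : M → ℕ → Bool) (p : M → M → ℕ → ι) : (L22 ι).Structure M where
  funMap f _ := f.elim
  RelMap {n} R x := (∀ i j : Fin n, i ≠ j → x i ≠ x j) ∧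
    (∀ (i : Fin n) (k : Fin R.1), q (x i) k = R.2.1 i k) ∧
    (∀ (i j : Fin n) (k : Fin R.1), p (x i) (x j) k = R.2.2 i j k)

lemma singleSplit {ι M : Type} (q : M → ℕ → Bool) (p : M → M → ℕ → ι) (bd : Cardinal) (m : ℕ)
    {γ : Ordinal} {w : Set M} {c : M} (hc : c ∈ w)
    (hrk : @rkGe (L22 ι) M (S22 q p) 0 bd (Order.succ γ) w) :
    ∃ c' : M, c' ∉ w ∧ @rkGe (L22 ι) M (S22 q p) 0 bd γ (w ∪ {c'}) ∧
      (∀ k, k < m → q c' k = q c k) ∧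
      (∀ k, k < m → p c' c' k = p c c k) ∧
      (∀ d ∈ w, d ≠ c → ∀ k, k < m → p c' d k = p c d k ∧ p d c' k = p d c k) := by
  classical
  letI : (L22 ι).Structure M := S22 q p
  rw [rkGe_succ] at hrk
  obtain ⟨hfin, hne, hstep⟩ := hrk
  letI fw : Fintype w := hfin.fintype
  set n := Fintype.card w with hn
  let e : w ≃ Fin n := Fintype.equivFin w
  let a : Fin n → M := fun i => ((e.symm i : w) : M)
  have hainj : Function.Injective a := fun i j hij => e.symm.injective (Subtype.ext hij)
  have harange : Set.range a = w := by
    ext x; constructor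
    · rintro ⟨i, rfl⟩; exact (e.symm i).2
    · intro hx; exact ⟨e ⟨x, hx⟩, by simp [a]⟩
  obtain ⟨k, hk⟩ : ∃ k, a k = c := by
    have : c ∈ Set.range a := harange ▸ hc
    exact this
  let R : (L22 ι).Relations n := ⟨m, fun i k' => q (a i) k', fun i j k' => p (a i) (a j) k'⟩
  let φ : (L22 ι).Formula (Fin n) := R.formula (fun i => Language.Term.var i)
  have hqf : φ.IsQF := (Language.BoundedFormula.IsAtomic.rel _ _).isQF
  have hrel : ∀ v : Fin n → M, φ.Realize v ↔
      ((∀ i j : Fin n, i ≠ j → v i ≠ v j) ∧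
        (∀ (i : Fin n) (k' : Fin m), q (v i) k' = q (a i) k') ∧
        (∀ (i j : Fin n) (k' : Fin m), p (v i) (v j) k' = p (a i) (a j) k')) := by
    intro v
    rw [Language.Formula.realize_rel]
    simp only [Language.Term.realize_var]
    exact Iff.rfl
  have hφa : φ.Realize a := by
    rw [hrel]
    exact ⟨fun i j hij h => hij (hainj h), fun i k' => rfl, fun i j k' => rfl⟩
  obtain ⟨b, hP, hbreal, hb01, hbeq, hb0⟩ := hstep n a hainj harange k φ hqf hφa
  have hb0' : ∀ i, b 0 i = a i := hb0 rfl
  obtain ⟨binj, bq, bp⟩ := (hrel (b 1)).1 (hbreal 1)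
  have hb1 : ∀ j, j ≠ k → b 1 j = a j := fun j hj => (hbeq j hj).symm.trans (hb0' j)
  refine ⟨b 1 k, ?_, ?_, ?_, ?_, ?_⟩
  · -- not in w
    rw [← harange]
    rintro ⟨j, hj⟩
    by_cases hjk : j = k
    · subst hjk; exact hb01 (by rw [hb0', hj])
    · exact binj k j (fun h => hjk h.symm) ((hb1 j hjk).trans hj).symm
  · -- rank
    have hre : (Set.range fun pr : Fin 2 × Fin n => b pr.1 pr.2) = w ∪ {b 1 k} := by
      ext x
      simp only [Set.mem_range, Set.mem_union, Set.mem_singleton_iff]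
      constructor
      · rintro ⟨⟨i, j⟩, rfl⟩
        by_cases hi : i = 0
        · subst hi
          left; rw [← harange, hb0' j]; exact ⟨j, rfl⟩
        · have hi1 : i = 1 := by omega
          subst hi1
          by_cases hjk : j = k
          · subst hjk; right; rfl
          · left; rw [← harange, hb1 j hjk]; exact ⟨j, rfl⟩
      · rintro (hx | rfl)
        · have : x ∈ Set.range a := by rw [harange]; exact hx
          obtain ⟨j, hj⟩ := this
          exact ⟨(0, j), (hb0' j).trans hj⟩
        · exact ⟨(1, k), rfl⟩
    rwa [hre] at hP
  · intro k' hk'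
    have := bq k ⟨k', hk'⟩
    rwa [hk] at this
  · intro k' hk'
    have := bp k k ⟨k', hk'⟩
    rwa [hk] at this
  · intro d hd hdc k' hk'
    obtain ⟨j, hj⟩ : ∃ j, a j = d := by
      have : d ∈ Set.range a := by rw [harange]; exact hd
      exact this
    have hjk : j ≠ k := fun h => hdc (by rw [← hj, h, hk])
    have hbj : b 1 j = a j := hb1 j hjk
    constructor
    · have := bp k j ⟨k', hk'⟩
      rwa [hk, hbj, hj] at this
    · have := bp j k ⟨k', hk'⟩
      rwa [hk, hbj, hj] at this
lemma mk_fin_arrow_le {X : Type} {κ : Cardinal} (hX : #X ≤ κ) (hκ : ℵ₀ ≤ κ) (n : ℕ) :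
    #(Fin n → X) ≤ κ := by
  induction n with
  | zero =>
    have : Subsingleton (Fin 0 → X) := ⟨fun f g => funext fun i => i.elim0⟩
    exact le_trans (Cardinal.le_one_iff_subsingleton.2 this) (le_trans one_le_aleph0 hκ)
  | succ n ih =>
    calc #(Fin (n+1) → X) = #(X × (Fin n → X)) :=
          Cardinal.mk_congr (Fin.consEquiv (fun _ => X)).symm
    _ ≤ κ * κ := by rw [Cardinal.mk_prod]; simp only [Cardinal.lift_id]; exact mul_le_mul' hX ih
    _ = κ := Cardinal.mul_eq_self hκ

lemma card_L22_le {ι : Type} {κ : Cardinal} (hι : #ι = κ) (hκ : ℵ₀ ≤ κ) :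
    (L22 ι).card ≤ κ := by
  have hb : #Bool ≤ κ := le_trans (le_of_lt (Cardinal.lt_aleph0_of_finite Bool)) hκ
  have hrel : ∀ n, #((L22 ι).Relations n) ≤ κ := by
    intro n
    have hterm : ∀ m : ℕ, #((Fin n → Fin m → Bool) × (Fin n → Fin n → Fin m → ι)) ≤ κ := by
      intro m
      rw [Cardinal.mk_prod]; simp only [Cardinal.lift_id]
      have h1 : #(Fin n → Fin m → Bool) ≤ κ := mk_fin_arrow_le (mk_fin_arrow_le hb hκ m) hκ n
      have h2 : #(Fin n → Fin n → Fin m → ι) ≤ κ :=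
        mk_fin_arrow_le (mk_fin_arrow_le (mk_fin_arrow_le (le_of_eq hι) hκ m) hκ n) hκ n
      calc #(Fin n → Fin m → Bool) * #(Fin n → Fin n → Fin m → ι) ≤ κ * κ := mul_le_mul' h1 h2
      _ = κ := Cardinal.mul_eq_self hκ
    calc #((L22 ι).Relations n)
        = Cardinal.sum (fun m : ℕ => #((Fin n → Fin m → Bool) × (Fin n → Fin n → Fin m → ι))) :=
          Cardinal.mk_sigma _
    _ ≤ Cardinal.sum (fun _ : ℕ => κ) := Cardinal.sum_le_sum _ _ hterm
    _ = ℵ₀ * κ := by simp [Cardinal.sum_const]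
    _ = κ := by rw [Cardinal.mul_eq_max le_rfl hκ]; exact max_eq_right hκ
  have hfun : #(Σ l, (L22 ι).Functions l) = 0 := by
    simp [L22]
  have hrels : #(Σ l, (L22 ι).Relations l) ≤ κ := by
    calc #(Σ l, (L22 ι).Relations l) = Cardinal.sum (fun l : ℕ => #((L22 ι).Relations l)) :=
          Cardinal.mk_sigma _
    _ ≤ Cardinal.sum (fun _ : ℕ => κ) := Cardinal.sum_le_sum _ _ hrel
    _ = ℵ₀ * κ := by simp [Cardinal.sum_const]
    _ = κ := by rw [Cardinal.mul_eq_max le_rfl hκ]; exact max_eq_right hκ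
  unfold Language.card
  rw [Language.Symbols, Cardinal.mk_sum]
  simp only [Cardinal.lift_id]
  rw [hfun, zero_add]
  exact hrels
lemma iterSplit {ι M : Type} (q : M → ℕ → Bool) (p : M → M → ℕ → ι) (bd : Cardinal) (m : ℕ)
    (l : List M) :
    ∀ (w : Set M) (γ : Ordinal), l.Nodup → (∀ c ∈ l, c ∈ w) → w.Finite →
    @rkGe (L22 ι) M (S22 q p) 0 bd (γ + (l.length : ℕ)) w →
    ∃ (w' : Set M) (g : M → M), w ⊆ w' ∧ w'.Finite ∧ @rkGe (L22 ι) M (S22 q p) 0 bd γ w' ∧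
      (∀ c ∈ l, g c ∈ w' ∧ g c ∉ w) ∧
      (∀ c ∈ l, ∀ c₂ ∈ l, c ≠ c₂ → g c ≠ g c₂) ∧
      (∀ c ∈ l, ∀ k, k < m → q (g c) k = q c k) ∧
      (∀ c ∈ l, ∀ k, k < m → p (g c) (g c) k = p c c k) ∧
      (∀ c ∈ l, ∀ c₂ ∈ l, c ≠ c₂ → ∀ k, k < m →
        p (g c) (g c₂) k = p c c₂ k ∧ p (g c₂) (g c) k = p c₂ c k) ∧
      (∀ c ∈ l, ∀ d ∈ w, d ≠ c → ∀ k, k < m → p (g c) d k = p c d k ∧ p d (g c) k = p d c k) := by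
  induction l with
  | nil =>
    intro w γ _ _ hwfin hrk
    refine ⟨w, id, subset_rfl, hwfin, ?_, by simp, by simp, by simp, by simp, by simp, by simp⟩
    simpa using hrk
  | cons c l' ih =>
    intro w γ hnd hmem hwfin hrk
    have hlen : γ + ((c :: l').length : ℕ) = Order.succ (γ + (l'.length : ℕ)) := by
      simp only [List.length_cons, Nat.cast_succ]
      rw [← add_assoc, Ordinal.add_one_eq_succ]
    rw [hlen] at hrk
    obtain ⟨c', hc'w, hrk1, hq1, hdiag1, hmir1⟩ :=
      singleSplit q p bd m (hmem c List.mem_cons_self) hrk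
    have hcl' : c ∉ l' := (List.nodup_cons.mp hnd).1
    have hnd' : l'.Nodup := (List.nodup_cons.mp hnd).2
    have hmem' : ∀ c₂ ∈ l', c₂ ∈ w ∪ {c'} := fun c₂ h => Or.inl (hmem c₂ (List.mem_cons_of_mem c h))
    have hne : ∀ c₂ ∈ l', c₂ ≠ c := by
      intro c₂ h heq; exact hcl' (heq ▸ h)
    obtain ⟨w', g', hsub', hfin', hrk', hginw, hginj, hgq, hgdiag, hgcross, hgmir⟩ :=
      ih (w ∪ {c'}) γ hnd' hmem' (hwfin.union (Set.finite_singleton c')) hrk1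
    classical
    refine ⟨w', fun d => if d = c then c' else g' d, subset_trans Set.subset_union_left hsub',
      hfin', hrk', ?_, ?_, ?_, ?_, ?_, ?_⟩
    · intro c₂ hmc
      rcases List.mem_cons.mp hmc with rfl | h
      · simp only [if_pos rfl]
        exact ⟨hsub' (Or.inr rfl), hc'w⟩
      · simp only [if_neg (hne c₂ h)]
        refine ⟨(hginw c₂ h).1, fun hin => (hginw c₂ h).2 (Or.inl hin)⟩
    · intro c₁ hmc1 c₂ hmc2 hne12
      rcases List.mem_cons.mp hmc1 with rfl | h1 <;> rcases List.mem_cons.mp hmc2 with heq2 | h2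
      · exact absurd heq2.symm hne12
      · simp only [if_pos, if_neg (hne c₂ h2)]
        exact fun heq => (hginw c₂ h2).2 (Or.inr heq.symm)
      · subst heq2
        simp only [if_pos, if_neg (hne c₁ h1)]
        exact fun heq => (hginw c₁ h1).2 (Or.inr heq)
      · simp only [if_neg (hne c₁ h1), if_neg (hne c₂ h2)]
        exact hginj c₁ h1 c₂ h2 hne12
    · intro c₁ hmc k hk
      rcases List.mem_cons.mp hmc with rfl | h
      · simp only [if_pos]; exact hq1 k hk
      · simp only [if_neg (hne c₁ h)]; exact hgq c₁ h k hk
    · intro c₁ hmc k hk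
      rcases List.mem_cons.mp hmc with rfl | h
      · simp only [if_pos]; exact hdiag1 k hk
      · simp only [if_neg (hne c₁ h)]; exact hgdiag c₁ h k hk
    · intro c₁ hmc1 c₂ hmc2 hne12 k hk
      rcases List.mem_cons.mp hmc1 with rfl | h1 <;> rcases List.mem_cons.mp hmc2 with heq2 | h2
      · exact absurd heq2.symm hne12
      · simp only [if_pos, if_neg (hne c₂ h2)]
        have hc2w : c₂ ∈ w := hmem c₂ (List.mem_cons_of_mem _ h2)
        have hc'ne : c' ≠ c₂ := fun heq => hc'w (heq ▸ hc2w)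
        have h7 := hgmir c₂ h2 c' (Or.inr rfl) hc'ne k hk
        have h5 := hmir1 c₂ hc2w (hne c₂ h2) k hk
        exact ⟨h7.2.trans h5.1, h7.1.trans h5.2⟩
      · subst heq2
        simp only [if_pos, if_neg (hne c₁ h1)]
        have hc1w : c₁ ∈ w := hmem c₁ (List.mem_cons_of_mem _ h1)
        have hc'ne : c' ≠ c₁ := fun heq => hc'w (heq ▸ hc1w)
        have h7 := hgmir c₁ h1 c' (Or.inr rfl) hc'ne k hk
        have h5 := hmir1 c₁ hc1w (hne c₁ h1) k hk
        exact ⟨h7.1.trans h5.2, h7.2.trans h5.1⟩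
      · simp only [if_neg (hne c₁ h1), if_neg (hne c₂ h2)]
        exact hgcross c₁ h1 c₂ h2 hne12 k hk
    · intro c₁ hmc d hd hdc k hk
      rcases List.mem_cons.mp hmc with rfl | h
      · simp only [if_pos]; exact hmir1 d hd hdc k hk
      · simp only [if_neg (hne c₁ h)]
        exact hgmir c₁ h d (Or.inl hd) hdc k hk
def Dt (ι : Type) (s : ℕ) : Type :=
  Σ m : ℕ, ((Fin s → Bool) → Fin m → Bool) × ((Fin s → Bool) → (Fin s → Bool) → Fin m → ι)

def LargeA {ι M : Type} (q : M → ℕ → Bool) (p : M → M → ℕ → ι) (bd : Cardinal) (o : Ordinal)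
    (s : ℕ) (d : Dt ι s) : Prop :=
  ∀ γ, γ < o → ∃ (w : Set M) (x : (Fin s → Bool) → M), Function.Injective x ∧
    (∀ u, x u ∈ w) ∧ w.Finite ∧ @rkGe (L22 ι) M (S22 q p) 0 bd γ w ∧
    (∀ u (k : ℕ) (hk : k < d.1), q (x u) k = d.2.1 u ⟨k, hk⟩) ∧
    (∀ u v (k : ℕ) (hk : k < d.1), p (x u) (x v) k = d.2.2 u v ⟨k, hk⟩)

def CohD {ι : Type} {s : ℕ} (d : Dt ι s) (d' : Dt ι (s+1)) : Prop :=
  d.1 < d'.1 ∧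
  (∀ u i (k : ℕ) (hk : k < d.1) (hk' : k < d'.1),
    d'.2.1 (Fin.snoc u i) ⟨k, hk'⟩ = d.2.1 u ⟨k, hk⟩) ∧
  (∀ u v i j, (u ≠ v ∨ i = j) → ∀ (k : ℕ) (hk : k < d.1) (hk' : k < d'.1),
    d'.2.2 (Fin.snoc u i) (Fin.snoc v j) ⟨k, hk'⟩ = d.2.2 u v ⟨k, hk⟩) ∧
  Function.Injective d'.2.1

lemma add_nat_lt_ord {κ : Cardinal} (hκ : ℵ₀ ≤ κ) {γ : Ordinal} (hγ : γ < (Order.succ κ).ord)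
    (n : ℕ) : γ + n < (Order.succ κ).ord := by
  rw [Cardinal.lt_ord] at hγ ⊢
  rw [Ordinal.card_add, Ordinal.card_nat]
  have h1 : ℵ₀ ≤ Order.succ κ := hκ.trans (le_of_lt (Order.lt_succ κ))
  exact Cardinal.add_lt_of_lt h1 hγ (lt_of_lt_of_le (Cardinal.nat_lt_aleph0 n) h1)

lemma sepLevel {M J : Type} [Fintype J] (q : M → ℕ → Bool)
    (hqinj : ∀ z z' : M, (∀ k, q z k = q z' k) → z = z') (y : J → M)
    (hy : Function.Injective y) (m : ℕ) :
    ∃ m' : ℕ, m < m' ∧ ∀ a b : J, (∀ k, k < m' → q (y a) k = q (y b) k) → a = b := by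
  classical
  have hD : ∀ ab : J × J, ∃ k, ab.1 ≠ ab.2 → q (y ab.1) k ≠ q (y ab.2) k := by
    rintro ⟨a, b⟩
    by_cases h : a = b
    · exact ⟨0, fun h' => absurd h h'⟩
    · by_contra hcon
      push_neg at hcon
      exact h (hy (hqinj _ _ fun k => (hcon k).2))
  choose Dk hDk using hD
  refine ⟨m + 1 + Finset.univ.sup (fun ab : J × J => Dk ab), by omega, ?_⟩
  intro a b hab
  by_contra hne
  refine hDk (a, b) hne (hab _ ?_)
  have : Dk (a, b) ≤ Finset.univ.sup (fun ab : J × J => Dk ab) := Finset.le_sup (Finset.mem_univ _)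
  omega

lemma mk_finarrow_le {J X : Type} [Fintype J] {κ : Cardinal} (hX : #X ≤ κ) (hκ : ℵ₀ ≤ κ) :
    #(J → X) ≤ κ := by
  rw [Cardinal.mk_congr (Equiv.arrowCongr (Fintype.equivFin J) (Equiv.refl X))]
  exact mk_fin_arrow_le hX hκ _

lemma mk_Dt_le {ι : Type} {κ : Cardinal} (hι : #ι = κ) (hκ : ℵ₀ ≤ κ) (s : ℕ) :
    #(Dt ι s) ≤ κ := by
  have hb : #Bool ≤ κ := le_trans (le_of_lt (Cardinal.lt_aleph0_of_finite Bool)) hκ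
  have hterm : ∀ m : ℕ, #((((Fin s → Bool) → Fin m → Bool)) ×
      ((Fin s → Bool) → (Fin s → Bool) → Fin m → ι)) ≤ κ := by
    intro m
    rw [Cardinal.mk_prod]; simp only [Cardinal.lift_id]
    have h1 : #((Fin s → Bool) → Fin m → Bool) ≤ κ :=
      mk_finarrow_le (mk_fin_arrow_le hb hκ m) hκ
    have h2 : #((Fin s → Bool) → (Fin s → Bool) → Fin m → ι) ≤ κ :=
      mk_finarrow_le (mk_finarrow_le (mk_fin_arrow_le (le_of_eq hι) hκ m) hκ) hκ
    calc _ ≤ κ * κ := mul_le_mul' h1 h2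
    _ = κ := Cardinal.mul_eq_self hκ
  calc #(Dt ι s) = Cardinal.sum (fun m : ℕ => #((((Fin s → Bool) → Fin m → Bool)) ×
      ((Fin s → Bool) → (Fin s → Bool) → Fin m → ι))) := Cardinal.mk_sigma _
  _ ≤ Cardinal.sum (fun _ : ℕ => κ) := Cardinal.sum_le_sum _ _ hterm
  _ = ℵ₀ * κ := by simp [Cardinal.sum_const]
  _ = κ := by rw [Cardinal.mul_eq_max le_rfl hκ]; exact max_eq_right hκ

lemma stageExt {ι M : Type} (q : M → ℕ → Bool) (p : M → M → ℕ → ι)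
    (hqinj : ∀ z z' : M, (∀ k, q z k = q z' k) → z = z')
    (bd : Cardinal) {κ : Cardinal} (hκ : ℵ₀ ≤ κ) (hι : #ι = κ)
    {s : ℕ} {d : Dt ι s} (hL : LargeA q p bd (Order.succ κ).ord s d) :
    ∃ d' : Dt ι (s+1), LargeA q p bd (Order.succ κ).ord (s+1) d' ∧ CohD d d' := by
  classical
  letI : (L22 ι).Structure M := S22 q p
  set o := (Order.succ κ).ord with ho
  have key : ∀ γ : {γ : Ordinal // γ < o}, ∃ d' : Dt ι (s+1), CohD d d' ∧
      ∃ (w : Set M) (x : (Fin (s+1) → Bool) → M), Function.Injective x ∧ (∀ u, x u ∈ w) ∧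
        w.Finite ∧ @rkGe (L22 ι) M (S22 q p) 0 bd γ.1 w ∧
        (∀ u (k : ℕ) (hk : k < d'.1), q (x u) k = d'.2.1 u ⟨k, hk⟩) ∧
        (∀ u v (k : ℕ) (hk : k < d'.1), p (x u) (x v) k = d'.2.2 u v ⟨k, hk⟩) := by
    rintro ⟨γ, hγ⟩
    obtain ⟨w, x, hxinj, hxw, hwfin, hrk, hqx, hpx⟩ :=
      hL (γ + (Fintype.card (Fin s → Bool) : ℕ)) (add_nat_lt_ord hκ hγ _)
    set nl : List (Fin s → Bool) := Finset.univ.toList with hnl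
    have hrk' : @rkGe (L22 ι) M (S22 q p) 0 bd (γ + ((nl.map x).length : ℕ)) w := by
      have hnlen : (nl.map x).length = Fintype.card (Fin s → Bool) := by
        simp [nl]
      rw [hnlen]; exact hrk
    have hnd : (nl.map x).Nodup := (Finset.nodup_toList _).map hxinj
    have hml : ∀ c ∈ nl.map x, c ∈ w := by
      rintro c hc
      obtain ⟨u, _, rfl⟩ := List.mem_map.mp hc
      exact hxw u
    obtain ⟨w', g, hww', hw'fin, hrkw', hginw, hginj, hgq, hgdiag, hgcross, hgmir⟩ :=
      iterSplit q p bd d.1 (nl.map x) w γ hnd hml hwfin hrk'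
    have hmem_l : ∀ u, x u ∈ nl.map x := fun u => List.mem_map.2 ⟨u, by simp [nl], rfl⟩
    set y : (Fin (s+1) → Bool) → M := fun u' =>
      if u' (Fin.last s) = true then g (x (Fin.init u')) else x (Fin.init u') with hydef
    have hxneg : ∀ u u', x u ≠ g (x u') := fun u u' heq => (hginw _ (hmem_l u')).2 (heq ▸ hxw u)
    have hrebuild : ∀ (u' v' : Fin (s+1) → Bool), Fin.init u' = Fin.init v' →
        u' (Fin.last s) = v' (Fin.last s) → u' = v' := by
      intro u' v' hi hl
      calc u' = Fin.snoc (Fin.init u') (u' (Fin.last s)) := (Fin.snoc_init_self u').symm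
      _ = Fin.snoc (Fin.init v') (v' (Fin.last s)) := by rw [hi, hl]
      _ = v' := Fin.snoc_init_self v'
    have hyinj : Function.Injective y := by
      intro u' v' heq
      by_cases hu : u' (Fin.last s) = true <;> by_cases hv : v' (Fin.last s) = true
      · simp only [y, hu, hv, if_pos] at heq
        have hinit : Fin.init u' = Fin.init v' := by
          by_contra hne
          exact hginj _ (hmem_l _) _ (hmem_l _)
            (fun h => hne (hxinj h)) heq
        exact hrebuild u' v' hinit (hu.trans hv.symm)
      · simp only [y, hu, hv, if_pos, if_neg, Bool.not_eq_true] at heq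
        exact absurd heq.symm (hxneg _ _)
      · simp only [y, hu, hv, if_pos, if_neg, Bool.not_eq_true] at heq
        exact absurd heq (hxneg _ _)
      · simp only [y, hu, hv, if_neg, Bool.not_eq_true] at heq
        have hinit : Fin.init u' = Fin.init v' := hxinj heq
        rw [Bool.not_eq_true] at hu hv
        exact hrebuild u' v' hinit (hu.trans hv.symm)
    obtain ⟨m', hm', hsep⟩ := sepLevel q hqinj y hyinj d.1
    have hyf : ∀ u, y (Fin.snoc u false) = x u := fun u => by
      simp [y, Fin.snoc_last, Fin.init_snoc]
    have hyt : ∀ u, y (Fin.snoc u true) = g (x u) := fun u => by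
      simp [y, Fin.snoc_last, Fin.init_snoc]
    refine ⟨⟨m', fun u' k => q (y u') k, fun u' v' k => p (y u') (y v') k⟩, ⟨hm', ?_, ?_, ?_⟩,
      w', y, hyinj, ?_, hw'fin, hrkw', fun u k hk => rfl, fun u v k hk => rfl⟩
    · -- σ coherence
      intro u i k hk hk'
      show q (y (Fin.snoc u i)) k = d.2.1 u ⟨k, hk⟩
      cases i
      · try simp only [hyf, hyt]
        exact hqx u k hk
      · try simp only [hyf, hyt]
        rw [hgq (x u) (hmem_l u) k hk]
        exact hqx u k hk
    · -- r coherence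
      intro u v i j hcond k hk hk'
      show p (y (Fin.snoc u i)) (y (Fin.snoc v j)) k = d.2.2 u v ⟨k, hk⟩
      by_cases huv : u = v
      · subst huv
        have hij : i = j := by
          rcases hcond with h | h
          · exact absurd rfl h
          · exact h
        subst hij
        cases i
        · try simp only [hyf, hyt]
          exact hpx u u k hk
        · try simp only [hyf, hyt]
          rw [hgdiag (x u) (hmem_l u) k hk]
          exact hpx u u k hk
      · have hxne : x u ≠ x v := fun h => huv (hxinj h)
        cases i <;> cases j <;> simp only [hyf, hyt]
        · exact hpx u v k hk
        · rw [(hgmir (x v) (hmem_l v) (x u) (hxw u) hxne k hk).2]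
          exact hpx u v k hk
        · rw [(hgmir (x u) (hmem_l u) (x v) (hxw v) (Ne.symm hxne) k hk).1]
          exact hpx u v k hk
        · rw [(hgcross (x u) (hmem_l u) (x v) (hmem_l v) hxne k hk).1]
          exact hpx u v k hk
    · -- σ' injective
      intro u' v' heq
      refine hsep u' v' fun k hk => ?_
      exact congrFun heq ⟨k, hk⟩
    · -- y lands in w'
      intro u
      by_cases h : u (Fin.last s) = true
      · simp only [y, h, if_pos]
        exact (hginw _ (hmem_l _)).1
      · simp only [y, h, if_neg, Bool.not_eq_true]
        exact hww' (hxw _)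
  choose F hF using key
  have hopos : (0 : Ordinal) < o := by
    rw [ho, Cardinal.lt_ord, Ordinal.card_zero]
    exact lt_of_lt_of_le Cardinal.aleph0_pos (hκ.trans (le_of_lt (Order.lt_succ κ)))
  by_cases hex : ∃ d' : Dt ι (s+1), ∀ δ, δ < o →
      ∃ γ : {γ : Ordinal // γ < o}, δ < γ.1 ∧ Order.IsSuccLimit γ.1 ∧ F γ = d'
  · obtain ⟨d', hd'⟩ := hex
    refine ⟨d', ?_, ?_⟩
    · intro δ hδ
      obtain ⟨γ, hδγ, hlim, hFγ⟩ := hd' δ hδ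
      obtain ⟨w, x, h1, h2, h3, h4, h5, h6⟩ := (hF γ).2
      rw [hFγ] at h5 h6
      exact ⟨w, x, h1, h2, h3, (rkGe_limit (L22 ι) M 0 bd hlim w).1 h4 δ hδγ, h5, h6⟩
    · obtain ⟨γ, _, _, hFγ⟩ := hd' 0 hopos
      exact hFγ ▸ (hF γ).1
  · exfalso
    push_neg at hex
    choose B hB1 hB2 using hex
    have hcof : #(Dt ι (s+1)) < o.cof := by
      rw [ho, (Cardinal.isRegular_succ hκ).cof_eq]
      exact lt_of_le_of_lt (mk_Dt_le hι hκ (s+1)) (Order.lt_succ κ)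
    have hsup : (⨆ d', B d') < o := Ordinal.iSup_lt_ord hcof hB1
    have hγlim : Order.IsSuccLimit ((⨆ d', B d') + Ordinal.omega0) :=
      Ordinal.isSuccLimit_add _ Ordinal.isSuccLimit_omega0
    have hγo : (⨆ d', B d') + Ordinal.omega0 < o := by
      rw [ho, Cardinal.lt_ord] at hsup ⊢
      rw [Ordinal.card_add, Ordinal.card_omega0]
      have h1 : ℵ₀ ≤ Order.succ κ := hκ.trans (le_of_lt (Order.lt_succ κ))
      exact Cardinal.add_lt_of_lt h1 hsup (lt_of_le_of_lt hκ (Order.lt_succ κ))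
    have hlt : B (F ⟨_, hγo⟩) < (⨆ d', B d') + Ordinal.omega0 :=
      lt_of_le_of_lt (Ordinal.le_iSup B _)
        (by simpa using (add_lt_add_iff_left (⨆ d', B d')).2 Ordinal.omega0_pos)
    exact hB2 _ ⟨_, hγo⟩ hlt hγlim rfl
lemma baseLarge {ι M : Type} (q : M → ℕ → Bool) (p : M → M → ℕ → ι) (bd : Cardinal)
    (o : Ordinal)
    (H : ∀ γ, γ < o → ∃ w : Set M, w.Finite ∧ w.Nonempty ∧ @rkGe (L22 ι) M (S22 q p) 0 bd γ w) :
    LargeA q p bd o 0 ⟨0, fun _ i => i.elim0, fun _ _ i => i.elim0⟩ := by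
  intro γ hγ
  obtain ⟨w, hfin, hne, hrk⟩ := H γ hγ
  refine ⟨w, fun _ => hne.some, fun a b _ => Subsingleton.elim a b, fun _ => hne.some_mem,
    hfin, hrk, ?_, ?_⟩
  · intro u k hk; exact absurd hk (Nat.not_lt_zero k)
  · intro u v k hk; exact absurd hk (Nat.not_lt_zero k)

lemma buildSeq {ι M : Type} (q : M → ℕ → Bool) (p : M → M → ℕ → ι)
    (hqinj : ∀ z z' : M, (∀ k, q z k = q z' k) → z = z')
    (bd : Cardinal) {κ : Cardinal} (hκ : ℵ₀ ≤ κ) (hι : #ι = κ)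
    (H : ∀ γ, γ < (Order.succ κ).ord → ∃ w : Set M, w.Finite ∧ w.Nonempty ∧
      @rkGe (L22 ι) M (S22 q p) 0 bd γ w) :
    ∃ D : ∀ s, Dt ι s, (∀ s, LargeA q p bd (Order.succ κ).ord s (D s)) ∧
      ∀ s, CohD (D s) (D (s+1)) := by
  classical
  let step : ∀ s, {d : Dt ι s // LargeA q p bd (Order.succ κ).ord s d} →
      {d : Dt ι (s+1) // LargeA q p bd (Order.succ κ).ord (s+1) d} := fun s prev =>
    ⟨Classical.choose (stageExt q p hqinj bd hκ hι prev.2),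
     (Classical.choose_spec (stageExt q p hqinj bd hκ hι prev.2)).1⟩
  let F : ∀ s, {d : Dt ι s // LargeA q p bd (Order.succ κ).ord s d} := fun s =>
    Nat.rec ⟨⟨0, fun _ i => i.elim0, fun _ _ i => i.elim0⟩, baseLarge q p bd _ H⟩ step s
  exact ⟨fun s => (F s).1, fun s => (F s).2,
    fun s => (Classical.choose_spec (stageExt q p hqinj bd hκ hι (F s).2)).2⟩

def rstr (b : ℕ → Bool) (s : ℕ) : Fin s → Bool := fun i => b i

lemma rstr_succ (b : ℕ → Bool) (s : ℕ) : rstr b (s+1) = Fin.snoc (rstr b s) (b s) := by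
  funext i
  refine Fin.lastCases ?_ ?_ i
  · rw [Fin.snoc_last]; rfl
  · intro j; rw [Fin.snoc_castSucc]; rfl

lemma rstr_ne {b c : ℕ → Bool} {s t : ℕ} (h : rstr b s ≠ rstr c s) (hst : s ≤ t) :
    rstr b t ≠ rstr c t := fun he =>
  h (funext fun i => congrFun he ⟨i.1, lt_of_lt_of_le i.2 hst⟩)

section Chain
variable {ι : Type} (D : ∀ s, Dt ι s) (hcoh : ∀ s, CohD (D s) (D (s+1)))

def gfun (hmge : ∀ s, s ≤ (D s).1) (b : ℕ → Bool) : ℕ → Bool :=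
  fun k => (D (k+1)).2.1 (rstr b (k+1)) ⟨k, lt_of_lt_of_le (Nat.lt_succ_self k) (hmge (k+1))⟩

include hcoh

lemma mD_mono : ∀ {s t : ℕ}, s ≤ t → (D s).1 ≤ (D t).1 := by
  intro s t hst
  induction t, hst using Nat.le_induction with
  | base => exact le_rfl
  | succ t hst ih => exact le_trans ih (le_of_lt (hcoh t).1)

lemma mD_ge : ∀ s, s ≤ (D s).1 := by
  intro s
  induction s with
  | zero => exact Nat.zero_le _
  | succ s ih => exact Nat.succ_le_of_lt (lt_of_le_of_lt ih (hcoh s).1)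

lemma sig_chain (b : ℕ → Bool) : ∀ {s t : ℕ}, s ≤ t → ∀ (k : ℕ) (hk : k < (D s).1)
    (hk' : k < (D t).1), (D t).2.1 (rstr b t) ⟨k, hk'⟩ = (D s).2.1 (rstr b s) ⟨k, hk⟩ := by
  intro s t hst
  induction t, hst using Nat.le_induction with
  | base => intro k hk hk'; rfl
  | succ t hst ih =>
    intro k hk hk'
    have hkt : k < (D t).1 := lt_of_lt_of_le hk (mD_mono D hcoh hst)
    rw [rstr_succ, (hcoh t).2.1 (rstr b t) (b t) k hkt hk']
    exact ih k hk hkt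

lemma r_chain (b c : ℕ → Bool) : ∀ {s t : ℕ}, s ≤ t →
    (rstr b s ≠ rstr c s ∨ b = c) → ∀ (k : ℕ) (hk : k < (D s).1) (hk' : k < (D t).1),
    (D t).2.2 (rstr b t) (rstr c t) ⟨k, hk'⟩ = (D s).2.2 (rstr b s) (rstr c s) ⟨k, hk⟩ := by
  intro s t hst
  induction t, hst using Nat.le_induction with
  | base => intro _ k hk hk'; rfl
  | succ t hst ih =>
    intro hcond k hk hk'
    have hkt : k < (D t).1 := lt_of_lt_of_le hk (mD_mono D hcoh hst)
    have hcond' : rstr b t ≠ rstr c t ∨ b t = c t := by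
      rcases hcond with h | h
      · exact Or.inl (rstr_ne h hst)
      · exact Or.inr (by rw [h])
    rw [rstr_succ b t, rstr_succ c t, (hcoh t).2.2.1 (rstr b t) (rstr c t) (b t) (c t) hcond' k hkt hk']
    exact ih hcond k hk hkt

lemma gfun_eq (hmge : ∀ s, s ≤ (D s).1) (b : ℕ → Bool) {s k : ℕ} (hk : k < (D s).1) :
    gfun D hmge b k = (D s).2.1 (rstr b s) ⟨k, hk⟩ := by
  rcases le_total (k+1) s with h | h
  · exact (sig_chain D hcoh b h k _ hk).symm
  · exact sig_chain D hcoh b h k hk _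

end Chain

lemma TFstage {ι M : Type} {q : M → ℕ → Bool} {p : M → M → ℕ → ι} {bd : Cardinal} {o : Ordinal}
    (hopos : (0 : Ordinal) < o) {s : ℕ} {d : Dt ι s}
    (hL : LargeA q p bd o s d) (T : Tree22 ι)
    (hqp : ∀ (z y : M) (n : ℕ), ((fun i : Fin n => q z i), (fun i : Fin n => q y i),
      (fun i : Fin n => p z y i)) ∈ T.mem n) (u v : Fin s → Bool) :
    ((fun i : Fin d.1 => d.2.1 u i), (fun i : Fin d.1 => d.2.1 v i),
      (fun i : Fin d.1 => d.2.2 u v i)) ∈ T.mem d.1 := by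
  obtain ⟨w, x, _, _, _, _, hqx, hpx⟩ := hL 0 hopos
  have h1 : (fun i : Fin d.1 => d.2.1 u i) = fun i : Fin d.1 => q (x u) i :=
    funext fun i => by rw [hqx u i.1 i.2]
  have h2 : (fun i : Fin d.1 => d.2.1 v i) = fun i : Fin d.1 => q (x v) i :=
    funext fun i => by rw [hqx v i.1 i.2]
  have h3 : (fun i : Fin d.1 => d.2.2 u v i) = fun i : Fin d.1 => p (x u) (x v) i :=
    funext fun i => by rw [hpx u v i.1 i.2]
  rw [h1, h2, h3]
  exact hqp (x u) (x v) d.1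

lemma branchMem {ι M : Type} {q : M → ℕ → Bool} {p : M → M → ℕ → ι} {bd : Cardinal}
    {o : Ordinal} (hopos : (0 : Ordinal) < o) (D : ∀ s, Dt ι s)
    (hDL : ∀ s, LargeA q p bd o s (D s)) (hcoh : ∀ s, CohD (D s) (D (s+1)))
    (T : Tree22 ι)
    (hqp : ∀ (z y : M) (n : ℕ), ((fun i : Fin n => q z i), (fun i : Fin n => q y i),
      (fun i : Fin n => p z y i)) ∈ T.mem n)
    (b c : ℕ → Bool) (s₀ : ℕ) (h0 : rstr b s₀ ≠ rstr c s₀ ∨ b = c) :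
    ∃ ρ : ℕ → ι, ∀ n : ℕ,
      ((fun i : Fin n => gfun D (mD_ge D hcoh) b i), (fun i : Fin n => gfun D (mD_ge D hcoh) c i),
        (fun i : Fin n => ρ i)) ∈ T.mem n := by
  have hmge := mD_ge D hcoh
  have hkm : ∀ k : ℕ, k < (D (max (k+1) s₀)).1 := fun k =>
    lt_of_lt_of_le (Nat.lt_succ_self k) (le_trans (le_max_left _ _) (hmge (max (k+1) s₀)))
  refine ⟨fun k => (D (max (k+1) s₀)).2.2 (rstr b (max (k+1) s₀)) (rstr c (max (k+1) s₀))
    ⟨k, hkm k⟩, fun n => ?_⟩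
  set s := max n s₀ with hs
  have hns : n ≤ (D s).1 := le_trans (le_max_left n s₀) (hmge s)
  have hcond : ∀ t, s₀ ≤ t → (rstr b t ≠ rstr c t ∨ b = c) := by
    rcases h0 with h | h
    · exact fun t ht => Or.inl (rstr_ne h ht)
    · exact fun t _ => Or.inr h
  have hTF := TFstage hopos (hDL s) T hqp (rstr b s) (rstr c s)
  have hcl := T.closed _ _ hTF n hns
  have e1 : (fun i : Fin n => gfun D hmge b i) =
      fun i : Fin n => (D s).2.1 (rstr b s) (Fin.castLE hns i) :=
    funext fun i => gfun_eq D hcoh hmge b (lt_of_lt_of_le i.2 hns)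
  have e2 : (fun i : Fin n => gfun D hmge c i) =
      fun i : Fin n => (D s).2.1 (rstr c s) (Fin.castLE hns i) :=
    funext fun i => gfun_eq D hcoh hmge c (lt_of_lt_of_le i.2 hns)
  have e3 : (fun i : Fin n => (D (max (i.1+1) s₀)).2.2 (rstr b (max (i.1+1) s₀))
      (rstr c (max (i.1+1) s₀)) ⟨i.1, hkm i.1⟩) =
      fun i : Fin n => (D s).2.2 (rstr b s) (rstr c s) (Fin.castLE hns i) := by
    funext i
    have hle : max (i.1+1) s₀ ≤ s := max_le (le_trans (Nat.succ_le_of_lt i.2) (le_max_left n s₀))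
      (le_max_right n s₀)
    exact (r_chain D hcoh b c hle (hcond _ (le_max_right _ _)) i.1 (hkm i.1)
      (lt_of_lt_of_le i.2 hns)).symm
  rw [e1, e2, e3]
  exact hcl
/-- if `Pr_{κ⁺}(λ; κ)` and the `κ`-Souslin set `prjlim T` of a
`(2,2,κ)`-tree `T` contains a `λ`-square, then it contains a perfect square. -/
theorem stmt_10 (κ : Cardinal.{0}) (hκ : ℵ₀ ≤ κ) (lam : Cardinal.{0})
    (hPr : Pr 0 (Order.succ κ).ord lam (Order.succ κ) κ)
    (ι : Type) (hι : Cardinal.mk ι = κ) (T : Tree22 ι)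
    (A : Set (ℕ → Bool)) (hA : Cardinal.mk A = lam) (hsub : A ×ˢ A ⊆ prjlim T) :
    ∃ P : Set (ℕ → Bool), Perfect P ∧ P.Nonempty ∧ P ×ˢ P ⊆ prjlim T := by
  classical
  have h1 : ℵ₀ ≤ Order.succ κ := hκ.trans (le_of_lt (Order.lt_succ κ))
  have hopos : (0 : Ordinal) < (Order.succ κ).ord := by
    rw [Cardinal.lt_ord, Ordinal.card_zero]
    exact lt_of_lt_of_le Cardinal.aleph0_pos h1
  have hMne : Nonempty ↥A := by
    obtain ⟨w, _, hne, _⟩ := hPr Language.empty ↥A Language.emptyStructure hA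
      (by rw [Language.card_empty]; exact zero_le (a := κ)) 0 hopos
    exact ⟨hne.some⟩
  have hwit : ∀ z y : ↥A, ∃ ρf : ℕ → ι, ∀ n : ℕ,
      ((fun i : Fin n => (z : ℕ → Bool) (i : ℕ)), (fun i : Fin n => (y : ℕ → Bool) (i : ℕ)),
        (fun i : Fin n => ρf (i : ℕ))) ∈ T.mem n := by
    intro z y
    exact hsub (Set.mk_mem_prod z.2 y.2)
  choose pfun hp using hwit
  set q : ↥A → ℕ → Bool := fun z k => (z : ℕ → Bool) k with hqdef
  have hqinj : ∀ z z' : ↥A, (∀ k, q z k = q z' k) → z = z' :=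
    fun z z' h => Subtype.ext (funext h)
  have hqp : ∀ (z y : ↥A) (n : ℕ), ((fun i : Fin n => q z (i : ℕ)),
      (fun i : Fin n => q y (i : ℕ)), (fun i : Fin n => pfun z y (i : ℕ))) ∈ T.mem n := hp
  have H : ∀ γ, γ < (Order.succ κ).ord → ∃ w : Set ↥A, w.Finite ∧ w.Nonempty ∧
      @rkGe (L22 ι) ↥A (S22 q pfun) 0 (Order.succ κ) γ w := fun γ hγ =>
    hPr (L22 ι) ↥A (S22 q pfun) hA (card_L22_le hι hκ) γ hγ
  obtain ⟨D, hDL, hDcoh⟩ := buildSeq q pfun hqinj (Order.succ κ) hκ hι H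
  have hmge := mD_ge D hDcoh
  set g : (ℕ → Bool) → (ℕ → Bool) := gfun D hmge with hgdef
  have hginj : Function.Injective g := by
    intro b c hbc
    by_contra hne
    obtain ⟨i, hi⟩ := Function.ne_iff.mp hne
    have hrne : rstr b (i+1) ≠ rstr c (i+1) := fun he => hi (congrFun he ⟨i, Nat.lt_succ_self i⟩)
    have hσne : (D (i+1)).2.1 (rstr b (i+1)) ≠ (D (i+1)).2.1 (rstr c (i+1)) :=
      fun he => hrne ((hDcoh i).2.2.2 he)
    obtain ⟨kk, hkk⟩ := Function.ne_iff.mp hσne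
    apply hkk
    calc (D (i+1)).2.1 (rstr b (i+1)) kk = g b kk.1 := (gfun_eq D hDcoh hmge b kk.2).symm
    _ = g c kk.1 := by rw [hbc]
    _ = (D (i+1)).2.1 (rstr c (i+1)) kk := gfun_eq D hDcoh hmge c kk.2
  have hgcont : Continuous g := by
    apply continuous_pi
    intro k
    have hfac : (fun b => g b k) = (fun v : Fin (k+1) → Bool =>
        (D (k+1)).2.1 v ⟨k, lt_of_lt_of_le (Nat.lt_succ_self k) (hmge (k+1))⟩) ∘
        (fun b : ℕ → Bool => rstr b (k+1)) := rfl
    rw [hfac]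
    exact Continuous.comp continuous_of_discreteTopology
      (continuous_pi fun i => continuous_apply (i : ℕ))
  refine ⟨Set.range g, ⟨(isCompact_range hgcont).isClosed, ?_⟩, ⟨g (fun _ => false),
    Set.mem_range_self _⟩, ?_⟩
  · -- Preperfect
    intro x hx
    obtain ⟨b, rfl⟩ := hx
    rw [accPt_iff_nhds]
    intro U hU
    set bs : ℕ → (ℕ → Bool) := fun s t => if t < s then b t else !(b t) with hbsdef
    have hrs : ∀ s k, k < s → bs s k = b k := fun s k hk => if_pos hk
    have hbne : ∀ s, bs s ≠ b := by
      intro s he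
      have h2 := congrFun he s
      simp only [bs, if_neg (lt_irrefl s)] at h2
      exact Bool.not_ne_self (b s) h2
    have htend : Filter.Tendsto (fun s => g (bs s)) Filter.atTop (nhds (g b)) := by
      rw [tendsto_pi_nhds]
      intro k
      refine Filter.Tendsto.congr' ?_ tendsto_const_nhds
      filter_upwards [Filter.eventually_ge_atTop (k+1)] with s hs
      show g b k = g (bs s) k
      have hre : rstr (bs s) (k+1) = rstr b (k+1) := funext fun i =>
        hrs s i.1 (lt_of_lt_of_le i.2 hs)
      show gfun D hmge b k = gfun D hmge (bs s) k
      unfold gfun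
      rw [hre]
    obtain ⟨s, hsU⟩ := (htend.eventually_mem hU).exists
    exact ⟨g (bs s), ⟨hsU, ⟨bs s, rfl⟩⟩, fun he => hbne s (hginj he)⟩
  · rintro ⟨x1, x2⟩ ⟨hx1, hx2⟩
    obtain ⟨b, rfl⟩ := hx1
    obtain ⟨c, rfl⟩ := hx2
    have hex0 : ∃ s₀, rstr b s₀ ≠ rstr c s₀ ∨ b = c := by
      by_cases hbc : b = c
      · exact ⟨0, Or.inr hbc⟩
      · obtain ⟨i, hi⟩ := Function.ne_iff.mp hbc
        exact ⟨i+1, Or.inl fun he => hi (congrFun he ⟨i, Nat.lt_succ_self i⟩)⟩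
    obtain ⟨s₀, h0⟩ := hex0
    obtain ⟨ρ, hρ⟩ := branchMem hopos D hDL hDcoh T hqp b c s₀ h0
    exact ⟨ρ, hρ⟩

end Sh522
end

section
/- If B ⊆ ω^ω × ω^ω is a Gδ set (a countable intersection of open sets) and X × X ⊆ B for some uncountable X ⊆ ω^ω, then B contains a perfect square P × P with P ⊆ ω^ω a nonempty perfect set. -/
open Cardinal Set PiNat TopologicalSpace

namespace Sh522

lemma cyl_prod_subset {U : Set ((ℕ → ℕ) × (ℕ → ℕ))} (hU : IsOpen U) {p q : ℕ → ℕ}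
    (h : (p, q) ∈ U) :
    ∃ m, ∀ x z : ℕ → ℕ, x ∈ cylinder p m → z ∈ cylinder q m → (x, z) ∈ U := by
  have h1 : U ∈ nhds (p, q) := hU.mem_nhds h
  rw [nhds_prod_eq, Filter.mem_prod_iff] at h1
  obtain ⟨A, hA, Bb, hBb, hsub⟩ := h1
  obtain ⟨vA, ⟨xa, na, rfl⟩, hpA, hAsub⟩ :=
    (isTopologicalBasis_cylinders (fun _ : ℕ => ℕ)).mem_nhds_iff.1 hA
  obtain ⟨vB, ⟨xb, nb, rfl⟩, hqB, hBsub⟩ :=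
    (isTopologicalBasis_cylinders (fun _ : ℕ => ℕ)).mem_nhds_iff.1 hBb
  refine ⟨max na nb, fun x z hx hz => ?_⟩
  apply hsub
  constructor
  · apply hAsub
    rw [← mem_cylinder_iff_eq.1 hpA]
    exact cylinder_anti p (le_max_left na nb) hx
  · apply hBsub
    rw [← mem_cylinder_iff_eq.1 hqB]
    exact cylinder_anti q (le_max_right na nb) hz

/-- A stage of the fusion construction. -/
structure Stage (Y : Set (ℕ → ℕ)) (U : Set ((ℕ → ℕ) × (ℕ → ℕ))) (n : ℕ) where
  y : (ℕ → Bool) → (ℕ → ℕ)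
  k : ℕ
  dep : ∀ a b : ℕ → Bool, (∀ i < n, a i = b i) → y a = y b
  mem : ∀ a, y a ∈ Y
  sep : ∀ a b : ℕ → Bool, (∃ i < n, a i ≠ b i) → ∃ i < k, y a i ≠ y b i
  sub : ∀ a b : ℕ → Bool, ∀ x z : ℕ → ℕ,
    x ∈ cylinder (y a) k → z ∈ cylinder (y b) k → (x, z) ∈ U

lemma step {Y : Set (ℕ → ℕ)}
    (hY2 : ∀ x ∈ Y, ∀ m : ℕ, ∃ z ∈ Y, z ≠ x ∧ z ∈ cylinder x m)
    {U' : Set ((ℕ → ℕ) × (ℕ → ℕ))} (hU' : IsOpen U')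
    (hYU' : ∀ p ∈ Y, ∀ q ∈ Y, (p, q) ∈ U')
    {U : Set ((ℕ → ℕ) × (ℕ → ℕ))} {n : ℕ} (S : Stage Y U n) :
    ∃ S' : Stage Y U' (n + 1), S.k < S'.k ∧ ∀ a, S'.y a ∈ cylinder (S.y a) S.k := by
  classical
  -- selection of a second point in each cylinder
  have hsel : ∀ x : ℕ → ℕ, ∃ z, x ∈ Y → (z ∈ Y ∧ z ≠ x ∧ z ∈ cylinder x S.k) := by
    intro x
    by_cases hx : x ∈ Y
    · obtain ⟨z, hz1, hz2, hz3⟩ := hY2 x hx S.k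
      exact ⟨z, fun _ => ⟨hz1, hz2, hz3⟩⟩
    · exact ⟨x, fun h => absurd h hx⟩
  choose sel hsel using hsel
  set y' : (ℕ → Bool) → (ℕ → ℕ) := fun a => if a n = true then sel (S.y a) else S.y a with hy'
  have hdep' : ∀ a b : ℕ → Bool, (∀ i < n + 1, a i = b i) → y' a = y' b := by
    intro a b hab
    have h1 : S.y a = S.y b := S.dep a b fun i hi => hab i (hi.trans n.lt_succ_self)
    have h2 : a n = b n := hab n n.lt_succ_self
    simp only [hy', h1, h2]
  have hmem' : ∀ a, y' a ∈ Y := by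
    intro a
    simp only [hy']
    split
    · exact (hsel (S.y a) (S.mem a)).1
    · exact S.mem a
  have hcyl' : ∀ a, y' a ∈ cylinder (S.y a) S.k := by
    intro a
    simp only [hy']
    split
    · exact (hsel (S.y a) (S.mem a)).2.2
    · exact self_mem_cylinder _ _
  -- finitely many values
  let ext : (Fin (n + 1) → Bool) → (ℕ → Bool) := fun s i => if h : i < n + 1 then s ⟨i, h⟩ else false
  have hfin : (Set.range fun s : Fin (n + 1) → Bool => y' (ext s)).Finite := Set.finite_range _
  let V : Finset (ℕ → ℕ) := hfin.toFinset
  have hV : ∀ a, y' a ∈ V := by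
    intro a
    have : y' a = y' (ext (fun i : Fin (n + 1) => a i)) := by
      apply hdep'
      intro i hi
      simp [ext, hi, Nat.le_of_lt_succ hi]
    rw [Set.Finite.mem_toFinset, this]
    exact ⟨fun i : Fin (n + 1) => a ↑i, rfl⟩
  -- uniform bound for pairs
  have key : ∀ p q : ℕ → ℕ, ∃ m, p ∈ Y → q ∈ Y →
      ((∀ x z : ℕ → ℕ, x ∈ cylinder p m → z ∈ cylinder q m → (x, z) ∈ U') ∧
       (p ≠ q → ∃ i < m, p i ≠ q i)) := by
    intro p q
    by_cases hpq : p ∈ Y ∧ q ∈ Y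
    · obtain ⟨m1, hm1⟩ := cyl_prod_subset hU' (hYU' p hpq.1 q hpq.2)
      by_cases hne : p = q
      · exact ⟨m1, fun _ _ => ⟨hm1, fun h => absurd hne h⟩⟩
      · obtain ⟨i, hi⟩ := Function.ne_iff.1 hne
        refine ⟨max m1 (i + 1), fun _ _ => ⟨fun x z hx hz =>
          hm1 x z (cylinder_anti p (le_max_left _ _) hx) (cylinder_anti q (le_max_left _ _) hz),
          fun _ => ⟨i, lt_of_lt_of_le (Nat.lt_succ_self i) (le_max_right _ _), hi⟩⟩⟩
    · exact ⟨0, fun hp hq => absurd ⟨hp, hq⟩ hpq⟩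
  choose g hg using key
  set k' : ℕ := max (S.k + 1) (V.sup fun p => V.sup fun q => g p q) with hk'
  have hgk' : ∀ a b : ℕ → Bool, g (y' a) (y' b) ≤ k' := by
    intro a b
    refine le_trans (le_trans (Finset.le_sup (hV b)) (Finset.le_sup (f := fun p => V.sup fun q => g p q) (hV a))) (le_max_right _ _)
  refine ⟨⟨y', k', hdep', hmem', ?_, ?_⟩, lt_of_lt_of_le (Nat.lt_succ_self _) (le_max_left _ _), hcyl'⟩
  · -- separation
    intro a b hab
    have hne : y' a ≠ y' b := by
      obtain ⟨i, hi, hine⟩ := hab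
      rcases Nat.lt_succ_iff_lt_or_eq.1 hi with hi' | hieq
      · obtain ⟨j, hj, hjne⟩ := S.sep a b ⟨i, hi', hine⟩
        intro hEq
        apply hjne
        have h1 := hcyl' a j hj
        have h2 := hcyl' b j hj
        rw [← h1, ← h2, hEq]
      · -- a i ≠ b i at i = n
        rw [hieq] at hine
        by_cases hagree : ∀ j < n, a j = b j
        · have hys : S.y a = S.y b := S.dep a b hagree
          cases ha : a n <;> cases hb : b n
          · exact absurd (ha.trans hb.symm) hine
          · have e1 : y' a = S.y a := if_neg (by simp [ha])
            have e2 : y' b = sel (S.y b) := if_pos hb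
            rw [e1, e2, hys]
            exact fun h => (hsel (S.y b) (S.mem b)).2.1 h.symm
          · have e1 : y' a = sel (S.y a) := if_pos ha
            have e2 : y' b = S.y b := if_neg (by simp [hb])
            rw [e1, e2, hys]
            exact (hsel (S.y b) (S.mem b)).2.1
          · exact absurd (ha.trans hb.symm) hine
        · push_neg at hagree
          obtain ⟨j, hj, hjne⟩ := hagree
          obtain ⟨l, hl, hlne⟩ := S.sep a b ⟨j, hj, hjne⟩
          intro hEq
          apply hlne
          have h1 := hcyl' a l hl
          have h2 := hcyl' b l hl
          rw [← h1, ← h2, hEq]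
    obtain ⟨i, hi, hine⟩ := (hg (y' a) (y' b) (hmem' a) (hmem' b)).2 hne
    exact ⟨i, lt_of_lt_of_le hi (hgk' a b), hine⟩
  · -- subset
    intro a b x z hx hz
    exact (hg (y' a) (y' b) (hmem' a) (hmem' b)).1 x z
      (cylinder_anti _ (hgk' a b) hx) (cylinder_anti _ (hgk' a b) hz)

/-- a Gδ subset of Baire space squared containing an uncountable
square contains a perfect square. -/
theorem stmt_11 (B : Set ((ℕ → ℕ) × (ℕ → ℕ))) (hB : IsGδ B)
    (X : Set (ℕ → ℕ)) (hX : ℵ₀ < Cardinal.mk X) (hXB : X ×ˢ X ⊆ B) :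
    ∃ P : Set (ℕ → ℕ), Perfect P ∧ P.Nonempty ∧ P ×ˢ P ⊆ B := by
  classical
  obtain ⟨U, hUo, hBU⟩ := hB.eq_iInter_nat
  -- condensation points of X
  set Y : Set (ℕ → ℕ) := {x ∈ X | ∀ u ∈ nhds x, ¬ (X ∩ u).Countable} with hYdef
  have hYX : Y ⊆ X := fun x hx => hx.1
  have hXYc : (X \ Y).Countable := by
    obtain ⟨b, hbc, -, hb⟩ := exists_countable_basis (ℕ → ℕ)
    have hsub : X \ Y ⊆ ⋃ u ∈ {u ∈ b | (X ∩ u).Countable}, (X ∩ u) := by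
      rintro x ⟨hxX, hxY⟩
      have hx2 : ¬ ∀ u ∈ nhds x, ¬ (X ∩ u).Countable := fun h => hxY ⟨hxX, h⟩
      push_neg at hx2
      obtain ⟨u, hu, huc⟩ := hx2
      obtain ⟨v, hv, hxv, hvu⟩ := hb.mem_nhds_iff.1 hu
      exact Set.mem_biUnion ⟨hv, huc.mono (inter_subset_inter_right X hvu)⟩ ⟨hxX, hxv⟩
    exact Set.Countable.mono hsub ((hbc.mono (sep_subset _ _)).biUnion fun u hu => hu.2)
  have hXc : ¬ X.Countable := fun h => hX.not_ge (le_aleph0_iff_set_countable.2 h)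
  have hYc : ¬ Y.Countable := by
    intro h
    apply hXc
    have hXss : X ⊆ (X \ Y) ∪ Y := fun x hx => by
      by_cases hxy : x ∈ Y
      · exact Or.inr hxy
      · exact Or.inl ⟨hx, hxy⟩
    exact (hXYc.union h).mono hXss
  have hY2 : ∀ x ∈ Y, ∀ m : ℕ, ∃ z ∈ Y, z ≠ x ∧ z ∈ cylinder x m := by
    intro x hx m
    have hcyl : cylinder x m ∈ nhds x :=
      (isOpen_cylinder (fun _ : ℕ => ℕ) x m).mem_nhds (self_mem_cylinder x m)
    have h1 : ¬ (X ∩ cylinder x m).Countable := hx.2 _ hcyl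
    have h2 : ¬ (Y ∩ cylinder x m).Countable := by
      intro h
      apply h1
      have hss : X ∩ cylinder x m ⊆ (Y ∩ cylinder x m) ∪ (X \ Y) := by
        rintro z ⟨hzX, hzc⟩
        by_cases hzy : z ∈ Y
        · exact Or.inl ⟨hzy, hzc⟩
        · exact Or.inr ⟨hzX, hzy⟩
      exact (h.union hXYc).mono hss
    by_contra hcon
    push_neg at hcon
    apply h2
    apply Set.Countable.mono _ (Set.countable_singleton x)
    rintro z ⟨hzY, hzc⟩
    have hzx : z = x := by
      by_contra hzx
      exact hcon z hzY hzx hzc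
    exact hzx
  have hYne : Y.Nonempty := by
    rcases Y.eq_empty_or_nonempty with h | h
    · exact absurd (h ▸ Set.countable_empty) hYc
    · exact h
  have hYU : ∀ n : ℕ, ∀ p ∈ Y, ∀ q ∈ Y, (p, q) ∈ U n := by
    intro n p hp q hq
    have : (p, q) ∈ B := hXB ⟨hYX hp, hYX hq⟩
    rw [hBU] at this
    exact mem_iInter.1 this n
  -- stage 0
  obtain ⟨y0, hy0⟩ := hYne
  obtain ⟨k0, hk0⟩ := cyl_prod_subset (hUo 0) (hYU 0 y0 hy0 y0 hy0)
  have S0 : Stage Y (U 0) 0 :=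
    ⟨fun _ => y0, k0, fun _ _ _ => rfl, fun _ => hy0,
     fun a b h => absurd h (by simp), fun a b x z hx hz => hk0 x z hx hz⟩
  have hstep : ∀ n (S : Stage Y (U n) n), ∃ S' : Stage Y (U (n + 1)) (n + 1),
      S.k < S'.k ∧ ∀ a, S'.y a ∈ cylinder (S.y a) S.k :=
    fun n S => step hY2 (hUo (n + 1)) (hYU (n + 1)) S
  obtain ⟨T, hT⟩ : ∃ T : ∀ n, Stage Y (U n) n, ∀ n,
      (T n).k < (T (n + 1)).k ∧ ∀ a, (T (n + 1)).y a ∈ cylinder ((T n).y a) ((T n).k) :=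
    ⟨fun n => Nat.rec S0 (fun n S => (hstep n S).choose) n,
     fun n => (hstep n _).choose_spec⟩
  set ky : ℕ → ℕ := fun n => (T n).k with hky
  have hkmono : StrictMono ky := strictMono_nat_of_lt_succ fun n => (hT n).1
  have hkyle : ∀ n, n ≤ ky n := fun n => hkmono.le_apply
  have hmono : ∀ m n : ℕ, m ≤ n → ∀ a, (T n).y a ∈ cylinder ((T m).y a) (ky m) := by
    intro m n hmn a
    induction n, hmn using Nat.le_induction with
    | base => exact self_mem_cylinder _ _
    | succ n hmn ih =>
      refine mem_cylinder_iff.2 fun i hi => ?_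
      have h1 := mem_cylinder_iff.1 ((hT n).2 a) i (lt_of_lt_of_le hi (hkmono.monotone hmn))
      rw [h1]
      exact mem_cylinder_iff.1 ih i hi
  set f : (ℕ → Bool) → (ℕ → ℕ) := fun a m => (T (m + 1)).y a m with hf
  have hflim : ∀ a n, f a ∈ cylinder ((T n).y a) (ky n) := by
    intro a n
    refine mem_cylinder_iff.2 fun m hm => ?_
    show (T (m + 1)).y a m = (T n).y a m
    rcases le_total n (m + 1) with h | h
    · exact mem_cylinder_iff.1 (hmono n (m + 1) h a) m hm
    · exact (mem_cylinder_iff.1 (hmono (m + 1) n h a) m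
        (lt_of_lt_of_le (Nat.lt_succ_self m) (hkyle (m + 1)))).symm
  have hinj : Function.Injective f := by
    intro a b hab
    by_contra hne
    obtain ⟨i, hi⟩ := Function.ne_iff.1 hne
    obtain ⟨j, hj, hjne⟩ := (T (i + 1)).sep a b ⟨i, Nat.lt_succ_self i, hi⟩
    apply hjne
    have h1 := mem_cylinder_iff.1 (hflim a (i + 1)) j hj
    have h2 := mem_cylinder_iff.1 (hflim b (i + 1)) j hj
    rw [← h1, ← h2, hab]
  have hcont : Continuous f := by
    refine continuous_pi fun m => ?_
    have heq : (fun a => f a m) =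
        (fun s : Fin (m + 1) → Bool =>
          (T (m + 1)).y (fun i => if h : i < m + 1 then s ⟨i, h⟩ else false) m)
          ∘ (fun a (i : Fin (m + 1)) => a i) := by
      funext a
      exact congrFun ((T (m + 1)).dep a _ (fun i hi => by simp [hi])) m
    rw [heq]
    exact continuous_of_discreteTopology.comp (continuous_pi fun i => continuous_apply (i : ℕ))
  refine ⟨Set.range f, ⟨(isCompact_range hcont).isClosed, preperfect_iff_nhds.2 ?_⟩,
    ⟨f (fun _ => false), Set.mem_range_self _⟩, ?_⟩
  · rintro x ⟨a, rfl⟩ u hu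
    have h1 : f ⁻¹' u ∈ nhds a := hcont.continuousAt.preimage_mem_nhds hu
    obtain ⟨v, ⟨c, N, rfl⟩, hav, hsubv⟩ :=
      (isTopologicalBasis_cylinders (fun _ : ℕ => Bool)).mem_nhds_iff.1 h1
    set b : ℕ → Bool := fun i => if i = N then !(a i) else a i with hbdef
    have hba : b ∈ cylinder a N := mem_cylinder_iff.2 fun i hi => by simp [hbdef, hi.ne]
    have hbne : b ≠ a := by
      intro h
      have h2 := congrFun h N
      simp [hbdef] at h2
    refine ⟨f b, ⟨hsubv ?_, Set.mem_range_self b⟩, fun h => hbne (hinj h)⟩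
    rw [← mem_cylinder_iff_eq.1 hav]
    exact hba
  · rintro ⟨x, z⟩ ⟨⟨a, rfl⟩, ⟨b, rfl⟩⟩
    rw [hBU]
    exact mem_iInter.2 fun n => (T n).sub a b _ _ (hflim a n) (hflim b n)

end Sh522
end

section
/- Let κ be an infinite cardinal and T a (2,2,κ)-tree. Then the complement (2^ω × 2^ω) ∖ prjlim(T) of the κ-Souslin set prjlim(T) can be written as a union ⋃_{i<κ⁺} B_i of κ⁺ many κ-Borel subsets of 2^ω × 2^ω. -/
open FirstOrder Cardinal

namespace Sh522


/-- `κ`-Borel subsets of a topological space: the smallest family containing the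
clopen sets and closed under unions and intersections of families of size `≤ κ`. -/
inductive KBorel (κ : Cardinal.{0}) {X : Type} [TopologicalSpace X] : Set X → Prop
  | clopen : ∀ s : Set X, IsClopen s → KBorel κ s
  | iUnion : ∀ (ι : Type) (f : ι → Set X), Cardinal.mk ι ≤ κ →
      (∀ i, KBorel κ (f i)) → KBorel κ (⋃ i, f i)
  | iInter : ∀ (ι : Type) (f : ι → Set X), Cardinal.mk ι ≤ κ →
      (∀ i, KBorel κ (f i)) → KBorel κ (⋂ i, f i)

/-- The `b`-th ordinal below `α`, for `b : α.ToType`. -/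
noncomputable def otypein (α : Ordinal.{0}) (b : α.ToType) : Ordinal.{0} :=
  @Ordinal.typein α.ToType (· < ·) isWellOrder_lt b

theorem otypein_lt_self (α : Ordinal.{0}) (b : α.ToType) : otypein α b < α := by
  have := @Ordinal.typein_lt_type α.ToType (· < ·) isWellOrder_lt b
  rwa [Ordinal.type_toType] at this

theorem otypein_surj (α : Ordinal.{0}) {β : Ordinal.{0}} (h : β < α) :
    ∃ b : α.ToType, otypein α b = β := by
  have h' : β < @Ordinal.type α.ToType (· < ·) isWellOrder_lt := by
    rwa [Ordinal.type_toType]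
  exact ⟨@Ordinal.enum α.ToType (· < ·) isWellOrder_lt ⟨β, h'⟩,
    @Ordinal.typein_enum α.ToType (· < ·) isWellOrder_lt β h'⟩

/-- The `α`-th approximation to the complement of `prjlim T`, localized at the node `ρ`:
`p ∈ E T α n ρ` roughly says that the subtree of `T(p)` above `ρ` has rank `< α`. -/
noncomputable def E {ι : Type} (T : Tree22 ι) (α : Ordinal.{0}) (n : ℕ) (ρ : Fin n → ι) :
    Set ((ℕ → Bool) × (ℕ → Bool)) :=
  {p | ((fun i : Fin n => p.1 i), (fun i : Fin n => p.2 i), ρ) ∉ T.mem n} ∪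
    ⋃ b : α.ToType, ⋂ i : ι, E T (otypein α b) (n+1) (Fin.snoc ρ i)
  termination_by α
  decreasing_by exact otypein_lt_self α b

theorem E_def {ι : Type} (T : Tree22 ι) (α : Ordinal.{0}) (n : ℕ) (ρ : Fin n → ι) :
    E T α n ρ =
    {p | ((fun i : Fin n => p.1 i), (fun i : Fin n => p.2 i), ρ) ∉ T.mem n} ∪
    ⋃ b : α.ToType, ⋂ i : ι, E T (otypein α b) (n+1) (Fin.snoc ρ i) := by
  rw [E]

theorem E_mono {ι : Type} (T : Tree22 ι) {α α' : Ordinal.{0}} (h : α ≤ α') (n : ℕ)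
    (ρ : Fin n → ι) : E T α n ρ ⊆ E T α' n ρ := by
  rw [E_def, E_def]
  apply Set.union_subset_union_right
  apply Set.iUnion_subset
  intro b
  obtain ⟨b', hb'⟩ := otypein_surj α' (lt_of_lt_of_le (otypein_lt_self α b) h)
  refine Set.subset_iUnion_of_subset b' ?_
  rw [hb']

theorem E_sound {ι : Type} (T : Tree22 ι) (p : (ℕ → Bool) × (ℕ → Bool)) :
    ∀ (α : Ordinal.{0}) (n : ℕ) (ρ : Fin n → ι), p ∈ E T α n ρ →
    ¬ ∃ ρb : ℕ → ι, (∀ i : Fin n, ρb i = ρ i) ∧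
      ∀ m : ℕ, ((fun i : Fin m => p.1 i), (fun i : Fin m => p.2 i),
        (fun i : Fin m => ρb i)) ∈ T.mem m := by
  intro α
  induction α using Ordinal.induction with
  | h α IH =>
    rintro n ρ hp ⟨ρb, hag, hmem⟩
    have hρ : (fun i : Fin n => ρb i) = ρ := funext hag
    have hnode : ((fun i : Fin n => p.1 i), (fun i : Fin n => p.2 i), ρ) ∈ T.mem n := by
      have := hmem n; rwa [hρ] at this
    rw [E_def] at hp
    rcases hp with hp | hp
    · exact hp hnode
    · obtain ⟨b, hb⟩ := Set.mem_iUnion.1 hp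
      have h2 := Set.mem_iInter.1 hb (ρb n)
      refine IH (otypein α b) (otypein_lt_self α b) (n+1) (Fin.snoc ρ (ρb n)) h2 ⟨ρb, ?_, hmem⟩
      intro i
      refine Fin.lastCases ?_ ?_ i
      · simp
      · intro j; simp [hag j]

/-- `ρ` is a node of the tree `T(p)`. -/
def nodeMem {ι : Type} (T : Tree22 ι) (p : (ℕ → Bool) × (ℕ → Bool))
    (s : Σ n : ℕ, Fin n → ι) : Prop :=
  ((fun i : Fin s.1 => p.1 i), (fun i : Fin s.1 => p.2 i), s.2) ∈ T.mem s.1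

/-- Child relation on nodes of `T(p)`. -/
def rel {ι : Type} (T : Tree22 ι) (p : (ℕ → Bool) × (ℕ → Bool))
    (a b : Σ n : ℕ, Fin n → ι) : Prop :=
  nodeMem T p a ∧ ∃ i : ι, a = ⟨b.1 + 1, Fin.snoc b.2 i⟩

theorem snoc_lt {ι : Type} {n : ℕ} (g : Fin n → ι) (i : ι) (k : ℕ) (hk : k < n)
    (hk' : k < n + 1) : (Fin.snoc g i : Fin (n + 1) → ι) ⟨k, hk'⟩ = g ⟨k, hk⟩ := by
  have h1 : (⟨k, hk'⟩ : Fin (n + 1)) = Fin.castSucc ⟨k, hk⟩ := rfl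
  rw [h1, Fin.snoc_castSucc]

theorem rel_wf {ι : Type} (T : Tree22 ι) (p : (ℕ → Bool) × (ℕ → Bool))
    (hp : p ∉ prjlim T) : WellFounded (rel T p) := by
  have key : ∀ a b : Σ n : ℕ, Fin n → ι, Relation.TransGen (rel T p) a b →
      b.1 < a.1 ∧ nodeMem T p a ∧
        ∀ (k : ℕ) (hk : k < b.1) (hk' : k < a.1), a.2 ⟨k, hk'⟩ = b.2 ⟨k, hk⟩ := by
    intro a b h
    induction h with
    | @single b h =>
      obtain ⟨hna, i, heq⟩ := h
      subst heq
      refine ⟨Nat.lt_succ_self _, hna, ?_⟩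
      intro k hk hk'
      exact snoc_lt b.2 i k hk hk'
    | @tail b c h1 h2 ih =>
      obtain ⟨hnb, i, heq⟩ := h2
      obtain ⟨ihlt, ihnm, ihcoh⟩ := ih
      subst heq
      have hlt : c.1 + 1 < a.1 := ihlt
      refine ⟨Nat.lt_of_le_of_lt (Nat.le_succ _) hlt, ihnm, ?_⟩
      intro k hk hk'
      have hkb : k < c.1 + 1 := Nat.lt_succ_of_lt hk
      rw [ihcoh k hkb hk']
      exact snoc_lt c.2 i k hk hkb
  haveI : IsStrictOrder (Σ n : ℕ, Fin n → ι) (Relation.TransGen (rel T p)) :=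
    { irrefl := fun a h => lt_irrefl _ (key a a h).1
      toIsTrans := inferInstance }
  refine Subrelation.wf (fun {x y} (h : rel T p x y) => Relation.TransGen.single h) ?_
  rw [RelEmbedding.wellFounded_iff_isEmpty]
  by_contra hne
  rw [not_isEmpty_iff] at hne
  obtain ⟨f⟩ := hne
  have hstep : ∀ m : ℕ, Relation.TransGen (rel T p) (f (m+1)) (f m) :=
    fun m => f.map_rel_iff.2 (Nat.lt_succ_self m)
  have htg : ∀ m m' : ℕ, m < m' → Relation.TransGen (rel T p) (f m') (f m) := by
    intro m m' hmm'
    have haux : ∀ d : ℕ, Relation.TransGen (rel T p) (f (m + d + 1)) (f m) := by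
      intro d
      induction d with
      | zero => exact hstep m
      | succ d ih => exact Relation.TransGen.trans (hstep (m + d + 1)) ih
    have := haux (m' - m - 1)
    rwa [show m + (m' - m - 1) + 1 = m' by omega] at this
  have hgrow : ∀ m : ℕ, m ≤ (f m).1 := by
    intro m
    induction m with
    | zero => exact Nat.zero_le _
    | succ m ih =>
      have := (key _ _ (hstep m)).1
      omega
  apply hp
  refine ⟨fun k => (f (k+1)).2 ⟨k, Nat.lt_of_lt_of_le (Nat.lt_succ_self k) (hgrow (k+1))⟩, ?_⟩
  intro n
  have hm : nodeMem T p (f (n+1)) := (key _ _ (hstep n)).2.1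
  have hn1 : n ≤ (f (n+1)).1 := le_of_lt (Nat.lt_of_lt_of_le (Nat.lt_succ_self n) (hgrow (n+1)))
  have hfinal := T.closed _ _ hm n hn1
  have hval : (fun i : Fin n => (f (n+1)).2 (Fin.castLE hn1 i)) = fun i : Fin n =>
      (f ((i : ℕ)+1)).2 ⟨(i : ℕ), Nat.lt_of_lt_of_le (Nat.lt_succ_self _) (hgrow ((i : ℕ)+1))⟩ := by
    funext i
    have hki : (i : ℕ) < (f (n+1)).1 := lt_of_lt_of_le i.isLt hn1
    exact (key _ _ (htg ((i : ℕ)+1) (n+1) (by omega))).2.2 (i : ℕ)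
      (Nat.lt_of_lt_of_le (Nat.lt_succ_self _) (hgrow ((i : ℕ)+1))) hki
  rw [← hval]
  exact hfinal


theorem E_complete {ι : Type} (T : Tree22 ι) (κ : Cardinal.{0}) (hκ : ℵ₀ ≤ κ)
    (hι : Cardinal.mk ι = κ) (p : (ℕ → Bool) × (ℕ → Bool)) (hp : p ∉ prjlim T) :
    ∃ α : Ordinal.{0}, α < (Order.succ κ).ord ∧ p ∈ E T α 0 Fin.elim0 := by
  have hwf := rel_wf T p hp
  have h0 : (0 : Ordinal.{0}) < (Order.succ κ).ord := by
    rw [Cardinal.lt_ord]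
    simp only [Ordinal.card_zero]
    exact lt_of_lt_of_le aleph0_pos (hκ.trans (Order.le_succ κ))
  have main : ∀ s : Σ n : ℕ, Fin n → ι, ∃ α : Ordinal.{0}, α < (Order.succ κ).ord ∧
      p ∈ E T α s.1 s.2 := by
    intro s
    refine hwf.induction (C := fun s => ∃ α : Ordinal.{0}, α < (Order.succ κ).ord ∧
      p ∈ E T α s.1 s.2) s ?_
    intro s IH
    by_cases hnode : nodeMem T p s
    · have hch : ∀ i : ι, ∃ α : Ordinal.{0}, α < (Order.succ κ).ord ∧
          p ∈ E T α (s.1+1) (Fin.snoc s.2 i) := by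
        intro i
        by_cases hc : nodeMem T p ⟨s.1+1, Fin.snoc s.2 i⟩
        · exact IH ⟨s.1+1, Fin.snoc s.2 i⟩ ⟨hc, i, rfl⟩
        · refine ⟨0, h0, ?_⟩
          rw [E_def]
          exact Or.inl hc
      choose g hg1 hg2 using hch
      have hsup : (⨆ i, g i) < (Order.succ κ).ord := by
        apply Ordinal.iSup_lt_ord
        · rw [(Cardinal.isRegular_succ hκ).cof_eq, hι]
          exact Order.lt_succ κ
        · exact hg1
      refine ⟨Order.succ (⨆ i, g i),
        (Cardinal.isSuccLimit_ord (hκ.trans (Order.le_succ κ))).succ_lt hsup, ?_⟩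
      rw [E_def]
      right
      obtain ⟨b, hb⟩ := otypein_surj (Order.succ (⨆ i, g i)) (Order.lt_succ (⨆ i, g i))
      refine Set.mem_iUnion.2 ⟨b, Set.mem_iInter.2 fun i => ?_⟩
      rw [hb]
      exact E_mono T (Ordinal.le_iSup g i) _ _ (hg2 i)
    · refine ⟨0, h0, ?_⟩
      rw [E_def]
      exact Or.inl hnode
  exact main ⟨0, Fin.elim0⟩

theorem E_kBorel (κ : Cardinal.{0}) (hκ : ℵ₀ ≤ κ) {ι : Type} (hι : Cardinal.mk ι = κ)
    (T : Tree22 ι) :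
    ∀ α : Ordinal.{0}, α < (Order.succ κ).ord → ∀ (n : ℕ) (ρ : Fin n → ι),
      KBorel κ (E T α n ρ) := by
  intro α
  induction α using Ordinal.induction with
  | h α IH =>
    intro hα n ρ
    rw [E_def, Set.union_eq_iUnion]
    refine KBorel.iUnion Bool _ ?_ ?_
    · rw [Cardinal.mk_bool]
      exact le_trans (by exact_mod_cast (Cardinal.nat_lt_aleph0 2).le) hκ
    · intro b
      cases b
      · -- cond false: the recursive union
        refine KBorel.iUnion α.ToType _ ?_ ?_
        · rw [Cardinal.mk_toType]
          exact Order.lt_succ_iff.1 (Cardinal.lt_ord.1 hα)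
        · intro b
          refine KBorel.iInter ι _ (le_of_eq hι) fun i => ?_
          exact IH (otypein α b) (otypein_lt_self α b) ((otypein_lt_self α b).trans hα)
            (n+1) (Fin.snoc ρ i)
      · -- cond true: the clopen base set
        have hcont : Continuous (fun p : (ℕ → Bool) × (ℕ → Bool) =>
            (((fun i : Fin n => p.1 i), (fun i : Fin n => p.2 i)) :
              (Fin n → Bool) × (Fin n → Bool))) := by
          refine Continuous.prodMk ?_ ?_
          · exact continuous_pi fun i => (continuous_apply ((i : ℕ))).comp continuous_fst
          · exact continuous_pi fun i => (continuous_apply ((i : ℕ))).comp continuous_snd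
        exact KBorel.clopen _
          ((isClopen_discrete {q : (Fin n → Bool) × (Fin n → Bool) |
            (q.1, q.2, ρ) ∉ T.mem n}).preimage hcont)


/-- the complement of the `κ`-Souslin set `prjlim T` of a
`(2,2,κ)`-tree is a union of `κ⁺` many `κ`-Borel sets. -/
theorem stmt_17 (κ : Cardinal.{0}) (hκ : ℵ₀ ≤ κ)
    (ι : Type) (hι : Cardinal.mk ι = κ) (T : Tree22 ι) :
    ∃ (J : Type) (_ : Cardinal.mk J = Order.succ κ)
      (B : J → Set ((ℕ → Bool) × (ℕ → Bool))),
      (∀ j, KBorel κ (B j)) ∧ (prjlim T)ᶜ = ⋃ j, B j := by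
  refine ⟨((Order.succ κ).ord).ToType, ?_, fun j => E T (otypein _ j) 0 Fin.elim0, ?_, ?_⟩
  · rw [Cardinal.mk_toType, Cardinal.card_ord]
  · intro j
    exact E_kBorel κ hκ hι T _ (otypein_lt_self _ j) 0 Fin.elim0
  · ext p
    simp only [Set.mem_compl_iff, Set.mem_iUnion]
    constructor
    · intro hp
      obtain ⟨α, hα, hmem⟩ := E_complete T κ hκ hι p hp
      obtain ⟨j, hj⟩ := otypein_surj _ hα
      exact ⟨j, by rw [hj]; exact hmem⟩
    · rintro ⟨j, hj⟩ hp
      obtain ⟨ρb, hρb⟩ := hp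
      exact E_sound T p _ 0 Fin.elim0 hj ⟨ρb, fun i => i.elim0, hρb⟩


end Sh522
end
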